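/- Let x_0, x_1, … be random vectors in a closed convex set Y satisfying E[dist²(x_{k+1}, X*)] ≤ E[dist²(x_k, X*)] − (β(2−β)/M_g²) E[(G(x_k))²] for all k ≥ 0, where G : Y → [0,∞) is convex, β ∈ (0,2), M_g > 0, and E[dist²(x_0,X*)] < ∞. Then the averaged iterates x̂_k = (1/k)Σ_{j=0}^{k−1} x_j satisfy (E[G(x̂_k)])² ≤ M_g² E[dist²(x_0, X*)]/(β(2−β) k) for all k ≥ 1. -/

import Mathlib

open MeasureTheory Finset

lemma sq_integral_le {Θ : Type*} [MeasurableSpace Θ] (μ : Measure Θ) [IsProbabilityMeasure μ]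
    (f : Θ → ℝ) (hf : Integrable f μ) (hf2 : Integrable (fun θ => f θ ^ 2) μ) :
    (∫ θ, f θ ∂μ) ^ 2 ≤ ∫ θ, f θ ^ 2 ∂μ := by
  set m := ∫ θ, f θ ∂μ with hm
  have h1 : Integrable (fun θ => (f θ - m) ^ 2) μ := by
    have : (fun θ => (f θ - m) ^ 2) = fun θ => f θ ^ 2 - 2 * m * f θ + m ^ 2 := by
      funext θ; ring
    rw [this]
    exact ((hf2.sub ((hf.const_mul (2*m)))).add (integrable_const _))
  have h0 : 0 ≤ ∫ θ, (f θ - m) ^ 2 ∂μ := integral_nonneg fun θ => sq_nonneg _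
  have hcalc : ∫ θ, (f θ - m) ^ 2 ∂μ = (∫ θ, f θ ^ 2 ∂μ) - m ^ 2 := by
    have : (fun θ => (f θ - m) ^ 2) = fun θ => f θ ^ 2 - 2 * m * f θ + m ^ 2 := by
      funext θ; ring
    have hsub : Integrable (fun θ => f θ ^ 2 - 2 * m * f θ) μ := hf2.sub (hf.const_mul (2*m))
    have hmul : Integrable (fun θ => 2 * m * f θ) μ := hf.const_mul (2*m)
    rw [this, integral_add hsub (integrable_const _),
      integral_sub hf2 hmul, integral_const_mul, integral_const]
    simp [← hm]; ring
  linarith [hcalc ▸ h0]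

noncomputable section

/-- Sublinear rate for the infeasibility measure `G` at the averaged iterates
(Theorem 1 in abstract form). -/
theorem stmt_9 {n : ℕ} {Θ : Type*} [MeasurableSpace Θ]
    (μ : Measure Θ) [IsProbabilityMeasure μ]
    (Y : Set (EuclideanSpace ℝ (Fin n))) (hYclosed : IsClosed Y) (hYconv : Convex ℝ Y)
    (Xs : Set (EuclideanSpace ℝ (Fin n))) (hXsY : Xs ⊆ Y) (hXsne : Xs.Nonempty)
    (hXsclosed : IsClosed Xs) (hXsconv : Convex ℝ Xs)
    (G : EuclideanSpace ℝ (Fin n) → ℝ) (hG : ConvexOn ℝ Y G)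
    (hGnn : ∀ y ∈ Y, 0 ≤ G y)
    (β M : ℝ) (hβ : β ∈ Set.Ioo (0 : ℝ) 2) (hM : 0 < M)
    (x : ℕ → Θ → EuclideanSpace ℝ (Fin n)) (hxY : ∀ k θ, x k θ ∈ Y)
    (hint0 : Integrable (fun θ => (Metric.infDist (x 0 θ) Xs) ^ 2) μ)
    (hintd : ∀ k, Integrable (fun θ => (Metric.infDist (x k θ) Xs) ^ 2) μ)
    (hintG : ∀ k, Integrable (fun θ => G (x k θ)) μ)
    (hintG2 : ∀ k, Integrable (fun θ => (G (x k θ)) ^ 2) μ)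
    (hintGavg : ∀ k : ℕ, 1 ≤ k →
      Integrable (fun θ => G ((1 / (k : ℝ)) • ∑ j ∈ Finset.range k, x j θ)) μ)
    (hdesc : ∀ k, ∫ θ, (Metric.infDist (x (k + 1) θ) Xs) ^ 2 ∂μ ≤
      (∫ θ, (Metric.infDist (x k θ) Xs) ^ 2 ∂μ) -
        (β * (2 - β) / M ^ 2) * ∫ θ, (G (x k θ)) ^ 2 ∂μ) :
    ∀ k : ℕ, 1 ≤ k →
      (∫ θ, G ((1 / (k : ℝ)) • ∑ j ∈ Finset.range k, x j θ) ∂μ) ^ 2 ≤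
        M ^ 2 * (∫ θ, (Metric.infDist (x 0 θ) Xs) ^ 2 ∂μ) / (β * (2 - β) * k) := by
  intro k hk
  obtain ⟨hβ0, hβ2⟩ := hβ
  set c : ℝ := β * (2 - β) / M ^ 2 with hc
  have hcpos : 0 < c := by
    apply div_pos (mul_pos hβ0 (by linarith)) (by positivity)
  set d : ℕ → ℝ := fun j => ∫ θ, (Metric.infDist (x j θ) Xs) ^ 2 ∂μ with hd
  set a : ℕ → ℝ := fun j => ∫ θ, (G (x j θ)) ^ 2 ∂μ with ha
  have hkpos : (0 : ℝ) < k := by exact_mod_cast hk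
  have hkne : (k : ℝ) ≠ 0 := ne_of_gt hkpos
  -- telescoping
  have htel : c * ∑ j ∈ range k, a j ≤ d 0 := by
    have h1 : ∀ j, c * a j ≤ d j - d (j + 1) := fun j => by
      have := hdesc j; simp only [hd, ha] at ⊢; linarith
    have h2 : ∑ j ∈ range k, (d j - d (j + 1)) = d 0 - d k :=
      Finset.sum_range_sub' d k
    have h3 : 0 ≤ d k := integral_nonneg fun θ => sq_nonneg _
    calc c * ∑ j ∈ range k, a j = ∑ j ∈ range k, c * a j := by rw [Finset.mul_sum]
      _ ≤ ∑ j ∈ range k, (d j - d (j + 1)) := Finset.sum_le_sum fun j _ => h1 j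
      _ = d 0 - d k := h2
      _ ≤ d 0 := by linarith
  -- pointwise Jensen + membership
  have hw1 : ∑ _j ∈ range k, (1 / (k : ℝ)) = 1 := by
    rw [Finset.sum_const, card_range, nsmul_eq_mul]; field_simp
  have hsmul : ∀ θ, (1 / (k : ℝ)) • ∑ j ∈ range k, x j θ
      = ∑ j ∈ range k, (1 / (k : ℝ)) • x j θ := fun θ => Finset.smul_sum
  have hmemY : ∀ θ, (1 / (k : ℝ)) • ∑ j ∈ range k, x j θ ∈ Y := fun θ => by
    rw [hsmul θ]
    exact hYconv.sum_mem (fun j _ => by positivity) hw1 (fun j _ => hxY j θ)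
  have hjensen : ∀ θ, G ((1 / (k : ℝ)) • ∑ j ∈ range k, x j θ)
      ≤ ∑ j ∈ range k, (1 / (k : ℝ)) * G (x j θ) := fun θ => by
    rw [hsmul θ]
    exact hG.map_sum_le (fun j _ => by positivity) hw1 (fun j _ => hxY j θ)
  -- integrate
  have hintsum : Integrable (fun θ => ∑ j ∈ range k, (1 / (k : ℝ)) * G (x j θ)) μ :=
    integrable_finset_sum _ fun j _ => (hintG j).const_mul _
  have hEavg : ∫ θ, G ((1 / (k : ℝ)) • ∑ j ∈ range k, x j θ) ∂μ
      ≤ ∑ j ∈ range k, (1 / (k : ℝ)) * ∫ θ, G (x j θ) ∂μ := by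
    calc ∫ θ, G ((1 / (k : ℝ)) • ∑ j ∈ range k, x j θ) ∂μ
        ≤ ∫ θ, ∑ j ∈ range k, (1 / (k : ℝ)) * G (x j θ) ∂μ :=
          integral_mono (hintGavg k hk) hintsum hjensen
      _ = ∑ j ∈ range k, ∫ θ, (1 / (k : ℝ)) * G (x j θ) ∂μ :=
          integral_finset_sum _ fun j _ => (hintG j).const_mul _
      _ = ∑ j ∈ range k, (1 / (k : ℝ)) * ∫ θ, G (x j θ) ∂μ := by
          simp [integral_const_mul]
  have hEnn : 0 ≤ ∫ θ, G ((1 / (k : ℝ)) • ∑ j ∈ range k, x j θ) ∂μ :=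
    integral_nonneg fun θ => hGnn _ (hmemY θ)
  set S : ℝ := ∑ j ∈ range k, ∫ θ, G (x j θ) ∂μ with hS
  have hstep1 : (∫ θ, G ((1 / (k : ℝ)) • ∑ j ∈ range k, x j θ) ∂μ) ^ 2
      ≤ ((1 / (k : ℝ)) * S) ^ 2 := by
    have : ∑ j ∈ range k, (1 / (k : ℝ)) * ∫ θ, G (x j θ) ∂μ = (1 / (k : ℝ)) * S := by
      rw [hS, Finset.mul_sum]
    apply pow_le_pow_left₀ hEnn (by linarith [hEavg, this ▸ hEavg])
  have hCS : S ^ 2 ≤ (k : ℝ) * ∑ j ∈ range k, (∫ θ, G (x j θ) ∂μ) ^ 2 := by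
    have := sq_sum_le_card_mul_sum_sq (s := range k) (f := fun j => ∫ θ, G (x j θ) ∂μ)
    simpa [card_range] using this
  have hsecond : ∑ j ∈ range k, (∫ θ, G (x j θ) ∂μ) ^ 2 ≤ ∑ j ∈ range k, a j :=
    Finset.sum_le_sum fun j _ => sq_integral_le μ _ (hintG j) (hintG2 j)
  have hsuma : ∑ j ∈ range k, a j ≤ d 0 / c := by
    rw [le_div_iff₀ hcpos]; linarith [htel]
  have hd0nn : 0 ≤ d 0 := integral_nonneg fun θ => sq_nonneg _
  calc (∫ θ, G ((1 / (k : ℝ)) • ∑ j ∈ range k, x j θ) ∂μ) ^ 2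
      ≤ ((1 / (k : ℝ)) * S) ^ 2 := hstep1
    _ = S ^ 2 / (k : ℝ) ^ 2 := by field_simp
    _ ≤ ((k : ℝ) * (d 0 / c)) / (k : ℝ) ^ 2 := by
        apply div_le_div_of_nonneg_right ?_ (by positivity)
        · calc S ^ 2 ≤ (k : ℝ) * ∑ j ∈ range k, (∫ θ, G (x j θ) ∂μ) ^ 2 := hCS
            _ ≤ (k : ℝ) * (d 0 / c) := by
                apply mul_le_mul_of_nonneg_left (le_trans hsecond hsuma) (le_of_lt hkpos)
    _ = d 0 / (c * k) := by rw [pow_two]; field_simp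
    _ = M ^ 2 * d 0 / (β * (2 - β) * k) := by
        have hbne : β * (2 - β) ≠ 0 := ne_of_gt (mul_pos hβ0 (by linarith))
        rw [hc]; field_simp
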